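/- Let b ≥ 5 be odd, and suppose v ∈ F_2^B is a b-repeating pattern (i.e., for every k with 1 ≤ k ≤ ⌊B/b⌋, (v_1,...,v_b) = (v_{bk+1},...,v_{bk+b})) that appears as a contiguous substring of some x in the balanced set Bal(n,b). Then B < b^4·log n. -/

import Mathlib

/-- Membership in the balanced set Bal(n,b): every window of length
`B ≥ b⁴·log₂ n` has weight strictly between `B/2 − B/(3b)` and `B/2 + B/(3b)`. -/
def memBal (n b : ℕ) (x : List Bool) : Prop :=
  x.length = n ∧
  ∀ B j : ℕ, B ≤ n → ((b : ℝ) ^ 4 * Real.logb 2 n ≤ (B : ℝ)) → j + B ≤ n →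
    ((B : ℝ) / 2 - (B : ℝ) / (3 * b) < (((x.drop j).take B).count true : ℝ) ∧
     (((x.drop j).take B).count true : ℝ) < (B : ℝ) / 2 + (B : ℝ) / (3 * b))

theorem repeating_pattern_short (n b B : ℕ) (hb : 5 ≤ b) (hbodd : Odd b)
    (x v : List Bool) (hx : memBal n b x) (hvlen : v.length = B)
    (hrep : ∀ k : ℕ, 1 ≤ k → b * k + b ≤ B →
      v.take b = (v.drop (b * k)).take b)
    (hinf : v <:+: x) :
    (B : ℝ) < (b : ℝ) ^ 4 * Real.logb 2 n := by
  by_contra hcon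
  push_neg at hcon
  -- First dispose of the degenerate case n ≤ 1, where memBal is contradictory.
  by_cases hn2 : n ≤ 1
  · have hlog0 : Real.logb 2 (n : ℝ) = 0 := by
      interval_cases n <;> simp
    have h := (hx.2 0 0 (Nat.zero_le n) (by rw [hlog0]; simp) (by simp)).1
    simp at h
  push_neg at hn2
  have hlog1 : (1 : ℝ) ≤ Real.logb 2 (n : ℝ) := by
    have h2 : Real.logb 2 (2 : ℝ) ≤ Real.logb 2 (n : ℝ) := by
      exact Real.logb_le_logb_of_le (by norm_num) (by norm_num) (by exact_mod_cast hn2)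
    simpa using h2
  have hbR : (5 : ℝ) ≤ (b : ℝ) := by exact_mod_cast hb
  have hBge : ((b : ℝ)) ^ 4 ≤ (B : ℝ) := by
    nlinarith [pow_pos (by linarith : (0:ℝ) < (b:ℝ)) 4]
  -- extract the window
  obtain ⟨p, t, hpt⟩ := hinf
  have hxlen : x.length = n := hx.1
  have hlen : p.length + B + t.length = n := by
    rw [← hxlen, ← hpt]; simp [hvlen]; ring
  have hwin : (x.drop p.length).take B = v := by
    rw [← hpt, List.append_assoc, List.drop_left, ← hvlen, List.take_left]
  have hbal := hx.2 B p.length (by omega) hcon (by omega)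
  rw [hwin] at hbal
  -- counting
  set w := (v.take b).count true with hw
  have hcount : ∀ k, b * k ≤ B → (v.take (b * k)).count true = k * w := by
    intro k
    induction k with
    | zero => simp
    | succ k ih =>
      intro hk
      have hk' : b * k ≤ B := by nlinarith
      have h1 : v.take (b * (k + 1)) = v.take (b * k) ++ ((v.drop (b * k)).take b) := by
        rw [Nat.mul_succ, List.take_add]
      have h2 : ((v.drop (b * k)).take b) = v.take b := by
        rcases Nat.eq_zero_or_pos k with h0 | h0
        · subst h0; simp
        · exact (hrep k h0 (by rw [Nat.mul_succ] at hk; omega)).symm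
      rw [h1, List.count_append, ih hk', h2, ← hw]
      ring
  set q := B / b with hq
  set r := B % b with hrdef
  have hdm : b * q + r = B := Nat.div_add_mod B b
  have hrb : r < b := Nat.mod_lt _ (by omega)
  set s := (v.drop (b * q)).count true with hs
  have hC : v.count true = q * w + s := by
    conv_lhs => rw [← List.take_append_drop (b * q) v]
    rw [List.count_append, hcount q (by omega), ← hs]
  have hsr : s ≤ r := by
    have h1 : s ≤ (v.drop (b * q)).length := List.count_le_length
    have h2 : (v.drop (b * q)).length = B - b * q := by rw [List.length_drop, hvlen]
    omega
  -- parity: the block weight is not b/2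
  have hwne : 2 * w ≠ b := by
    rcases hbodd with ⟨m, hm⟩; omega
  -- real versions
  have hCreal : ((v.count true : ℕ) : ℝ) = (q : ℝ) * w + s := by
    rw [hC]; push_cast; ring
  have hBreal : (B : ℝ) = (q : ℝ) * b + r := by
    rw [← hdm]; push_cast; ring
  have hsrR : (s : ℝ) ≤ (r : ℝ) := by exact_mod_cast hsr
  have hrbR : (r : ℝ) < (b : ℝ) := by exact_mod_cast hrb
  have hs0 : (0 : ℝ) ≤ (s : ℝ) := Nat.cast_nonneg s
  have hq0 : (0 : ℝ) ≤ (q : ℝ) := Nat.cast_nonneg q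
  have hr0 : (0 : ℝ) ≤ (r : ℝ) := Nat.cast_nonneg r
  have h3b : (0 : ℝ) < 3 * (b : ℝ) := by linarith
  -- key inequality: (q - r) * (3b) < 2B in both parity cases
  have key : ((q : ℝ) - r) * (3 * b) < 2 * B := by
    rcases lt_or_gt_of_ne hwne with hlt | hgt
    · -- 2w ≤ b - 1
      have h2w : 2 * (w : ℝ) ≤ (b : ℝ) - 1 := by
        have : 2 * w + 1 ≤ b := by omega
        have := (Nat.cast_le (α := ℝ)).mpr this
        push_cast at this; linarith
      have hqw : (q : ℝ) * (2 * w) ≤ (q : ℝ) * (b - 1) :=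
        mul_le_mul_of_nonneg_left h2w hq0
      have h1 : (B : ℝ) / 2 - ((v.count true : ℕ) : ℝ) < (B : ℝ) / (3 * b) := by
        linarith [hbal.1]
      have h2 := (lt_div_iff₀ h3b).mp h1
      -- (q - r) ≤ 2 * (B/2 - C)
      have hstep : (q : ℝ) - r ≤ 2 * ((B : ℝ) / 2 - ((v.count true : ℕ) : ℝ)) := by
        rw [hCreal]; rw [hBreal]; linarith [hqw, hsrR]
      have hm := mul_le_mul_of_nonneg_right hstep h3b.le
      have e : (2 * ((B : ℝ) / 2 - ((v.count true : ℕ) : ℝ))) * (3 * b)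
          = 2 * (((B : ℝ) / 2 - ((v.count true : ℕ) : ℝ)) * (3 * b)) := by ring
      linarith [hm, h2, e]
    · -- 2w ≥ b + 1
      have h2w : (b : ℝ) + 1 ≤ 2 * (w : ℝ) := by
        have : b + 1 ≤ 2 * w := by omega
        have := (Nat.cast_le (α := ℝ)).mpr this
        push_cast at this; linarith
      have hqw : (q : ℝ) * (b + 1) ≤ (q : ℝ) * (2 * w) :=
        mul_le_mul_of_nonneg_left h2w hq0
      have h1 : ((v.count true : ℕ) : ℝ) - (B : ℝ) / 2 < (B : ℝ) / (3 * b) := by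
        linarith [hbal.2]
      have h2 := (lt_div_iff₀ h3b).mp h1
      have hstep : (q : ℝ) - r ≤ 2 * (((v.count true : ℕ) : ℝ) - (B : ℝ) / 2) := by
        rw [hCreal]; rw [hBreal]; linarith [hqw, hs0]
      have hm := mul_le_mul_of_nonneg_right hstep h3b.le
      have e : (2 * (((v.count true : ℕ) : ℝ) - (B : ℝ) / 2)) * (3 * b)
          = 2 * ((((v.count true : ℕ) : ℝ) - (B : ℝ) / 2) * (3 * b)) := by ring
      linarith [hm, h2, e]
  -- final contradiction: B = qb + r, q b < 3b² + 2b, so B < 3b²+3b ≤ b⁴ ≤ B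
  have hb4n : 3 * (b * b) + 3 * b ≤ b ^ 4 := by
    have h1 : 25 ≤ b * b := Nat.mul_le_mul hb hb
    have h2' : 25 * (b * b) ≤ (b * b) * (b * b) := Nat.mul_le_mul_right _ h1
    have h3' : b ≤ b * b := Nat.le_mul_of_pos_left b (by omega)
    nlinarith [h1, h2', h3']
  have hb4 : 3 * ((b : ℝ) * b) + 3 * (b : ℝ) ≤ (b : ℝ) ^ 4 := by exact_mod_cast hb4n
  have hrb2 : (r : ℝ) * b < (b : ℝ) * b := mul_lt_mul_of_pos_right hrbR (by linarith)
  have e2 : ((q : ℝ) - r) * (3 * b) = 3 * ((q : ℝ) * b) - 3 * ((r : ℝ) * b) := by ring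
  have e3 : (B : ℝ) * 1 = (q : ℝ) * b + r := by rw [mul_one]; exact hBreal
  linarith [key, e2, hrb2, hrbR, hb4, hBge, e3]
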